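/- (Functional equation of finite star-multiple polylogarithms) Let p be a prime and $\Bbbk$ an index with Hoffman dual $\Bbbk^\vee$. Then $\text{£}^{\star}_{p, \Bbbk}(t) \equiv (t^{p} - 1)\, \text{£}^{\star}_{p, \Bbbk^{\vee}}\!\left(\frac{t}{t-1}\right) - t^{p}\, \zeta^{\star}_{p}(\Bbbk^{\vee}) \pmod{p}$, where both sides are rational functions in t with coefficients in $\mathbb{Z}_{(p)}$ and the left side is a polynomial; equivalently the identity holds after multiplying by $(t-1)^{p-1}$ to clear denominators. -/

import Mathlib

open Polynomial

/-- The finite set of weakly decreasing tuples `N ≥ n_1 ≥ n_2 ≥ ⋯ ≥ n_m ≥ 1`, encoded as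
functions `Fin m → ℕ`. -/
def decTuples (m N : ℕ) : Finset (Fin m → ℕ) :=
  (Fintype.piFinset fun _ => Finset.Icc 1 N).filter fun n => ∀ i j : Fin m, i ≤ j → n j ≤ n i

/-- The set of partial sums `{k_1, k_1 + k_2, …, k_1 + ⋯ + k_{m-1}}` of an index
`𝕜 = (k_1, …, k_m)`, the total sum being removed. -/
def commaSet {m : ℕ} (k : Fin m → ℕ) : Finset ℕ :=
  (Finset.image (fun i : Fin m => ∑ j ∈ Finset.Iic i, k j) Finset.univ).erase (∑ j, k j)

/-- `c ∈ p ℤ_(p)`. -/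
def InPZp (p : ℕ) (c : ℚ) : Prop :=
  ∃ a b : ℤ, ¬ (p : ℤ) ∣ b ∧ (b : ℚ) * c = (p : ℚ) * (a : ℚ)

/-- The one-variable finite star-multiple polylogarithm
`£^⋆_{p,𝕜}(t) = ∑_{p-1 ≥ n_1 ≥ ⋯ ≥ n_m ≥ 1} t^{n_1}/(n_1^{k_1} ⋯ n_m^{k_m})` over `ℚ`. -/
noncomputable def Lstar (p m : ℕ) (hm : 0 < m) (k : Fin m → ℕ) : Polynomial ℚ :=
  ∑ n ∈ decTuples m (p - 1),
    C ((1 : ℚ) / ∏ i, (n i : ℚ) ^ (k i)) * X ^ (n ⟨0, hm⟩)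

/-- `(t-1)^{p-1} £^⋆_{p,𝕜}(t/(t-1))`: the polynomial obtained from `£^⋆_{p,𝕜}(t/(t-1))` by
clearing the denominators (each term `(t/(t-1))^{n_1}` becomes `t^{n_1} (t-1)^{p-1-n_1}`). -/
noncomputable def LstarFrac (p m : ℕ) (hm : 0 < m) (k : Fin m → ℕ) : Polynomial ℚ :=
  ∑ n ∈ decTuples m (p - 1),
    C ((1 : ℚ) / ∏ i, (n i : ℚ) ^ (k i)) * X ^ (n ⟨0, hm⟩) * (X - 1) ^ (p - 1 - n ⟨0, hm⟩)

open Finset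

lemma range_succ_eq_insert_Icc (s : ℕ) : Finset.range (s+1) = insert 0 (Finset.Icc 1 s) := by
  ext x; simp [Nat.lt_succ_iff]; omega

lemma pascalQ (s v : ℕ) (hv : 1 ≤ v) (hs : 1 ≤ s) :
    (s.choose v : ℚ) = ((s-1).choose v : ℚ) + ((s-1).choose (v-1) : ℚ) := by
  obtain ⟨a, rfl⟩ : ∃ a, s = a + 1 := ⟨s - 1, by omega⟩
  obtain ⟨b, rfl⟩ : ∃ b, v = b + 1 := ⟨v - 1, by omega⟩
  simp [Nat.choose_succ_succ]
  ring

lemma alt_sum_choose (s v : ℕ) (hv : 1 ≤ v) (hs : 1 ≤ s) :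
    ∑ u ∈ Finset.Icc v s, (-1:ℚ)^(u-1) * (s.choose u : ℚ)
      = (-1:ℚ)^(v-1) * ((s-1).choose (v-1) : ℚ) := by
  induction v, hv using Nat.le_induction with
  | base =>
    have h0 : ∑ u ∈ Finset.range (s+1), (-1:ℚ)^u * (s.choose u : ℚ) = 0 := by
      have := Int.alternating_sum_range_choose (n := s)
      have hs' : s ≠ 0 := by omega
      rw [if_neg hs'] at this
      have : ((∑ m ∈ Finset.range (s + 1), (-1:ℤ) ^ m * ↑(s.choose m) : ℤ) : ℚ) = ((0:ℤ):ℚ) := by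
        rw [this]
      push_cast at this
      simpa using this
    rw [range_succ_eq_insert_Icc, Finset.sum_insert (by simp)] at h0
    simp only [pow_zero, Nat.choose_zero_right, Nat.cast_one, one_mul] at h0
    have : ∑ u ∈ Finset.Icc 1 s, (-1:ℚ)^(u-1) * (s.choose u : ℚ)
        = -∑ u ∈ Finset.Icc 1 s, (-1:ℚ)^u * (s.choose u : ℚ) := by
      rw [← Finset.sum_neg_distrib]
      apply Finset.sum_congr rfl
      intro u hu
      simp only [Finset.mem_Icc] at hu
      obtain ⟨a, rfl⟩ : ∃ a, u = a + 1 := ⟨u - 1, by omega⟩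
      simp [pow_succ]
    rw [this]; simp; linarith
  | succ v hv ih =>
    by_cases h : v ≤ s
    · have hIcc : Finset.Icc v s = insert v (Finset.Icc (v+1) s) := by
        ext x; simp [Finset.mem_Icc]; omega
      rw [hIcc, Finset.sum_insert (by simp)] at ih
      have pascal := pascalQ s v hv hs
      have hstep : ∑ u ∈ Finset.Icc (v+1) s, (-1:ℚ)^(u-1) * (s.choose u : ℚ)
          = (-1:ℚ)^(v-1) * ((s-1).choose (v-1) : ℚ) - (-1:ℚ)^(v-1) * (s.choose v : ℚ) := by
        linarith [ih]
      rw [hstep, pascal]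
      have hv1 : v + 1 - 1 = v := by omega
      rw [hv1]
      obtain ⟨b, rfl⟩ : ∃ b, v = b + 1 := ⟨v - 1, by omega⟩
      simp [pow_succ]
      ring
    · rw [Finset.Icc_eq_empty (by omega), Finset.sum_empty,
        Nat.choose_eq_zero_of_lt (by omega)]
      simp

lemma hockey (s v : ℕ) (hv : 1 ≤ v) :
    ∑ u ∈ Finset.Icc v s, (((u-1).choose (v-1) : ℕ) : ℚ) = (s.choose v : ℚ) := by
  rcases Nat.eq_zero_or_pos s with hs | hs
  · subst hs
    rw [Finset.Icc_eq_empty (by omega), Finset.sum_empty, Nat.choose_eq_zero_of_lt (by omega)]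
    simp
  · have key : ∑ u ∈ Finset.Icc v s, (u-1).choose (v-1) = s.choose v := by
      have h0 := Nat.sum_Icc_choose (s-1) (v-1)
      have h1 : s - 1 + 1 = s := by omega
      have h2 : v - 1 + 1 = v := by omega
      rw [h1, h2] at h0
      rw [← h0]
      have hmap : Finset.Icc v s = Finset.map (addRightEmbedding 1) (Finset.Icc (v-1) (s-1)) := by
        rw [Finset.map_add_right_Icc, h1, h2]
      rw [hmap, Finset.sum_map]
      apply Finset.sum_congr rfl
      intro m _; simp [addRightEmbedding]
    rw [← Nat.cast_sum, key]

lemma inv_mul_choose (s v : ℕ) (hv : 1 ≤ v) (hs : 1 ≤ s) :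
    (s:ℚ)⁻¹ * (s.choose v : ℚ) = (v:ℚ)⁻¹ * ((s-1).choose (v-1) : ℚ) := by
  have key : s * ((s-1).choose (v-1)) = s.choose v * v := by
    have h0 := Nat.add_one_mul_choose_eq (s-1) (v-1)
    have h1 : s - 1 + 1 = s := by omega
    have h2 : v - 1 + 1 = v := by omega
    rwa [h1, h2] at h0
  have hs0 : (s:ℚ) ≠ 0 := by positivity
  have hv0 : (v:ℚ) ≠ 0 := by positivity
  have : ((s * ((s-1).choose (v-1)) : ℕ) : ℚ) = ((s.choose v * v : ℕ) : ℚ) := by rw [key]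
  push_cast at this
  field_simp
  linarith

/-- Star sum with prescribed top `s`, in the "word" encoding: `Bw s bs` is the sum over
`ν_1 = s ≥ ν_2 ≥ ⋯ ≥ ν_w ≥ 1` (where `w = bs.length + 1`, the constraint `ν_j = ν_{j+1}`
imposed when `bs[j-1] = false`) of `∏ 1/ν_j`. -/
def Bw : ℕ → List Bool → ℚ
  | s, [] => (s:ℚ)⁻¹
  | s, true :: bs => (s:ℚ)⁻¹ * ∑ u ∈ Finset.Icc 1 s, Bw u bs
  | s, false :: bs => (s:ℚ)⁻¹ * Bw s bs

@[simp] lemma Bw_nil (s : ℕ) : Bw s [] = (s:ℚ)⁻¹ := rfl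
@[simp] lemma Bw_true (s : ℕ) (bs : List Bool) :
    Bw s (true :: bs) = (s:ℚ)⁻¹ * ∑ u ∈ Finset.Icc 1 s, Bw u bs := rfl
@[simp] lemma Bw_false (s : ℕ) (bs : List Bool) :
    Bw s (false :: bs) = (s:ℚ)⁻¹ * Bw s bs := rfl

lemma Bw_replicate (j s : ℕ) (bs : List Bool) :
    Bw s (List.replicate j false ++ bs) = ((s:ℚ)⁻¹)^j * Bw s bs := by
  induction j with
  | zero => simp
  | succ j ih => rw [List.replicate_succ, List.cons_append, Bw_false, ih, pow_succ]; ring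

/-- The key duality for `Bw`: dualizing the word corresponds to a signed binomial transform. -/
theorem Bw_dual (bs : List Bool) : ∀ s : ℕ, 1 ≤ s →
    Bw s bs = ∑ u ∈ Finset.Icc 1 s,
      (-1:ℚ)^(u-1) * (((s-1).choose (u-1) : ℕ) : ℚ) * Bw u (bs.map not) := by
  induction bs with
  | nil =>
    intro s hs
    rw [List.map_nil]
    simp only [Bw_nil]
    have : ∀ u ∈ Finset.Icc 1 s, (-1:ℚ)^(u-1) * (((s-1).choose (u-1) : ℕ) : ℚ) * (u:ℚ)⁻¹
        = (s:ℚ)⁻¹ * ((-1:ℚ)^(u-1) * ((s.choose u : ℕ) : ℚ)) := by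
      intro u hu
      simp only [Finset.mem_Icc] at hu
      have := inv_mul_choose s u hu.1 hs
      calc (-1:ℚ)^(u-1) * (((s-1).choose (u-1) : ℕ) : ℚ) * (u:ℚ)⁻¹
          = (-1:ℚ)^(u-1) * ((u:ℚ)⁻¹ * (((s-1).choose (u-1) : ℕ) : ℚ)) := by ring
        _ = (-1:ℚ)^(u-1) * ((s:ℚ)⁻¹ * ((s.choose u : ℕ) : ℚ)) := by rw [← this]
        _ = (s:ℚ)⁻¹ * ((-1:ℚ)^(u-1) * ((s.choose u : ℕ) : ℚ)) := by ring
    rw [Finset.sum_congr rfl this, ← Finset.mul_sum]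
    have := alt_sum_choose s 1 le_rfl hs
    simp only [Nat.sub_self, pow_zero, Nat.choose_zero_right] at this
    rw [this]
    simp
  | cons b bs ih =>
    intro s hs
    cases b with
    | true =>
      rw [Bw_true, List.map_cons, Bool.not_true]
      have step1 : ∑ u ∈ Finset.Icc 1 s, Bw u bs
          = ∑ u ∈ Finset.Icc 1 s, ∑ v ∈ Finset.Icc 1 u,
              (-1:ℚ)^(v-1) * (((u-1).choose (v-1) : ℕ) : ℚ) * Bw v (bs.map not) := by
        apply Finset.sum_congr rfl
        intro u hu
        simp only [Finset.mem_Icc] at hu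
        exact ih u hu.1
      rw [step1, Finset.sum_comm' (t' := Finset.Icc 1 s) (s' := fun v => Finset.Icc v s)
        (by intro u v; simp only [Finset.mem_Icc]; omega)]
      have step2 : ∀ v ∈ Finset.Icc 1 s,
          ∑ u ∈ Finset.Icc v s, (-1:ℚ)^(v-1) * (((u-1).choose (v-1) : ℕ) : ℚ) * Bw v (bs.map not)
          = (-1:ℚ)^(v-1) * ((s.choose v : ℕ) : ℚ) * Bw v (bs.map not) := by
        intro v hv
        simp only [Finset.mem_Icc] at hv
        rw [← Finset.sum_mul, ← Finset.mul_sum, hockey s v hv.1]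
      rw [Finset.sum_congr rfl step2, Finset.mul_sum]
      apply Finset.sum_congr rfl
      intro v hv
      simp only [Finset.mem_Icc] at hv
      rw [Bw_false]
      have := inv_mul_choose s v hv.1 hs
      calc (s:ℚ)⁻¹ * ((-1:ℚ)^(v-1) * ((s.choose v : ℕ) : ℚ) * Bw v (bs.map not))
          = (-1:ℚ)^(v-1) * ((s:ℚ)⁻¹ * ((s.choose v : ℕ) : ℚ)) * Bw v (bs.map not) := by ring
        _ = (-1:ℚ)^(v-1) * ((v:ℚ)⁻¹ * (((s-1).choose (v-1) : ℕ) : ℚ)) * Bw v (bs.map not) := by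
            rw [this]
        _ = (-1:ℚ)^(v-1) * (((s-1).choose (v-1) : ℕ) : ℚ) * ((v:ℚ)⁻¹ * Bw v (bs.map not)) := by
            ring
    | false =>
      rw [Bw_false, List.map_cons, Bool.not_false, ih s hs, Finset.mul_sum]
      have rhs : ∀ u ∈ Finset.Icc 1 s,
          (-1:ℚ)^(u-1) * (((s-1).choose (u-1) : ℕ) : ℚ) * Bw u (true :: bs.map not)
          = ∑ v ∈ Finset.Icc 1 u,
              (-1:ℚ)^(u-1) * (((s-1).choose (u-1) : ℕ) : ℚ) * ((u:ℚ)⁻¹ * Bw v (bs.map not)) := by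
        intro u hu
        rw [Bw_true, Finset.mul_sum, Finset.mul_sum]
      rw [Finset.sum_congr rfl rhs, Finset.sum_comm' (t' := Finset.Icc 1 s)
        (s' := fun v => Finset.Icc v s) (by intro u v; simp only [Finset.mem_Icc]; omega)]
      apply Finset.sum_congr rfl
      intro v hv
      simp only [Finset.mem_Icc] at hv
      have inner : ∀ u ∈ Finset.Icc v s,
          (-1:ℚ)^(u-1) * (((s-1).choose (u-1) : ℕ) : ℚ) * ((u:ℚ)⁻¹ * Bw v (bs.map not))
          = ((s:ℚ)⁻¹ * ((-1:ℚ)^(u-1) * ((s.choose u : ℕ) : ℚ))) * Bw v (bs.map not) := by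
        intro u hu
        simp only [Finset.mem_Icc] at hu
        have := inv_mul_choose s u (by omega) hs
        calc (-1:ℚ)^(u-1) * (((s-1).choose (u-1) : ℕ) : ℚ) * ((u:ℚ)⁻¹ * Bw v (bs.map not))
            = (-1:ℚ)^(u-1) * ((u:ℚ)⁻¹ * (((s-1).choose (u-1) : ℕ) : ℚ)) * Bw v (bs.map not) := by
              ring
          _ = (-1:ℚ)^(u-1) * ((s:ℚ)⁻¹ * ((s.choose u : ℕ) : ℚ)) * Bw v (bs.map not) := by
              rw [← this]
          _ = ((s:ℚ)⁻¹ * ((-1:ℚ)^(u-1) * ((s.choose u : ℕ) : ℚ))) * Bw v (bs.map not) := by ring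
      rw [Finset.sum_congr rfl inner, ← Finset.sum_mul, ← Finset.mul_sum,
        alt_sum_choose s v hv.1 hs]
      ring

/-- The word (in `{false,true}`) associated to a composition, with `true` at the comma
positions. -/
def wordL : List ℕ → List Bool
  | [] => []
  | [c] => List.replicate (c-1) false
  | c :: x :: l => List.replicate (c-1) false ++ true :: wordL (x :: l)

/-- Proper partial sums of a list. -/
def psumsL : List ℕ → Finset ℕ
  | [] => ∅
  | [_] => ∅
  | c :: x :: l => insert c ((psumsL (x :: l)).image (c + ·))

@[simp] lemma wordL_single (c : ℕ) : wordL [c] = List.replicate (c-1) false := rfl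
@[simp] lemma wordL_cons_cons (c x : ℕ) (l : List ℕ) :
    wordL (c :: x :: l) = List.replicate (c-1) false ++ true :: wordL (x :: l) := rfl

lemma psumsL_pos : ∀ (l : List ℕ), (∀ a ∈ l, 0 < a) → ∀ y ∈ psumsL l, 0 < y
  | [], _, y, hy => by simp [psumsL] at hy
  | [c], _, y, hy => by simp [psumsL] at hy
  | c :: x :: l, hpos, y, hy => by
      simp only [psumsL, Finset.mem_insert, Finset.mem_image] at hy
      rcases hy with rfl | ⟨z, hz, rfl⟩
      · exact hpos y (by simp)
      · have := hpos c (by simp); omega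

lemma wordL_length : ∀ (l : List ℕ), l ≠ [] → (∀ a ∈ l, 0 < a) →
    (wordL l).length = l.sum - 1 := by
  intro l
  induction l with
  | nil => intro h; exact absurd rfl h
  | cons c t ih =>
    intro _ hpos
    cases t with
    | nil => simp [wordL]
    | cons x l =>
      have hc : 0 < c := hpos c (by simp)
      have hx : 0 < x := hpos x (by simp)
      have := ih (by simp) (fun a ha => hpos a (by simp [ha]))
      simp only [wordL, List.length_append, List.length_replicate, List.length_cons, this]
      have hsum : 1 ≤ (x :: l).sum := by simp; omega
      simp only [List.sum_cons]
      omega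

lemma wordL_get : ∀ (l : List ℕ), l ≠ [] → (∀ a ∈ l, 0 < a) →
    ∀ j (hlen : j < (wordL l).length), ((wordL l)[j] = true ↔ (j+1) ∈ psumsL l) := by
  intro l
  induction l with
  | nil => intro h; exact absurd rfl h
  | cons c t ih =>
    intro _ hpos j hlen
    cases t with
    | nil =>
      simp only [wordL] at hlen ⊢
      rw [List.getElem_replicate]
      simp [psumsL]
    | cons x l =>
      have hc : 0 < c := hpos c (by simp)
      have hpos' : ∀ a ∈ (x :: l), 0 < a := fun a ha => hpos a (by simp [ha])
      simp only [wordL, List.length_append, List.length_replicate, List.length_cons] at hlen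
      simp only [wordL, psumsL, Finset.mem_insert, Finset.mem_image]
      rcases lt_trichotomy j (c-1) with hj | hj | hj
      · rw [List.getElem_append_left (by simpa using hj)]
        rw [List.getElem_replicate]
        constructor
        · intro h; exact absurd h (by simp)
        · rintro (h | ⟨z, hz, hz2⟩)
          · omega
          · have := psumsL_pos _ hpos' z hz; omega
      · have hge : (List.replicate (c-1) false).length ≤ j := by simp [hj]
        rw [List.getElem_append_right hge, List.getElem_cons,
          dif_pos (by simp; omega : j - (List.replicate (c-1) false).length = 0)]
        constructor
        · intro _; left; omega
        · intro _; rfl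
      · have hge : (List.replicate (c-1) false).length ≤ j := by simp; omega
        have hlen' : j - c < (wordL (x :: l)).length := by omega
        have hgoal : (List.replicate (c-1) false ++ true :: wordL (x :: l))[j]'(by
            simp only [List.length_append, List.length_replicate, List.length_cons]; omega)
            = (wordL (x :: l))[j - c]'hlen' := by
          rw [List.getElem_append_right hge, List.getElem_cons, dif_neg (by simp; omega)]
          congr 1
          simp; omega
        rw [hgoal, ih (by simp) hpos' (j - c) hlen']
        constructor
        · intro h; right; exact ⟨j - c + 1, h, by omega⟩
        · rintro (h | ⟨z, hz, hz2⟩)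
          · omega
          · have : z = j - c + 1 := by omega
            rwa [← this]

lemma wordL_dual (l l' : List ℕ) (hl : l ≠ []) (hl' : l' ≠ [])
    (hpos : ∀ a ∈ l, 0 < a) (hpos' : ∀ a ∈ l', 0 < a) (hsum : l'.sum = l.sum)
    (hd : ∀ x : ℕ, x ∈ psumsL l' ↔ (0 < x ∧ x < l.sum ∧ x ∉ psumsL l)) :
    wordL l' = (wordL l).map not := by
  have hlen : (wordL l').length = ((wordL l).map not).length := by
    rw [wordL_length l' hl' hpos', List.length_map, wordL_length l hl hpos, hsum]
  apply List.ext_getElem hlen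
  intro j h1 h2
  rw [List.getElem_map]
  have h2' : j < (wordL l).length := by simpa using h2
  have hj : j + 1 < l.sum := by
    rw [wordL_length l hl hpos] at h2'
    have : 1 ≤ l.sum := by
      cases l with
      | nil => exact absurd rfl hl
      | cons a t => have := hpos a (by simp); simp; omega
    omega
  have e1 := wordL_get l' hl' hpos' j h1
  have e2 := wordL_get l hl hpos j h2'
  have key : ((wordL l')[j] = true) ↔ ¬ ((wordL l)[j]'h2' = true) := by
    rw [e1, e2, hd (j+1)]
    constructor
    · rintro ⟨_, _, h⟩; exact h
    · intro h; exact ⟨by omega, hj, h⟩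
  cases hb : (wordL l')[j] <;> cases hb' : (wordL l)[j]'h2' <;> simp_all

lemma psumsL_ofFn (m : ℕ) : ∀ (k : Fin (m+1) → ℕ), (∀ i, 0 < k i) →
    psumsL (List.ofFn k) = (Finset.image
      (fun i : Fin (m+1) => ((List.ofFn k).take ((i:ℕ)+1)).sum) Finset.univ).erase
      ((List.ofFn k).sum) := by
  induction m with
  | zero =>
    intro k hk
    have : List.ofFn k = [k 0] := by
      rw [List.ofFn_succ]; simp
    rw [this]
    simp [psumsL]
  | succ m ih =>
    intro k hk
    have hofn : List.ofFn k = k 0 :: List.ofFn (fun i : Fin (m+1) => k i.succ) :=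
      List.ofFn_succ (f := k)
    have hofn2 : List.ofFn (fun i : Fin (m+1) => k i.succ)
        = k 1 :: List.ofFn (fun i : Fin m => k i.succ.succ) := by
      rw [List.ofFn_succ]
      congr 1
    have htailpos : ∀ a ∈ List.ofFn (fun i : Fin (m+1) => k i.succ), 0 < a := by
      intro a ha
      rw [List.mem_ofFn] at ha
      obtain ⟨i, rfl⟩ := ha
      exact hk _
    have htsum : 1 ≤ (List.ofFn (fun i : Fin (m+1) => k i.succ)).sum := by
      rw [hofn2]
      have := hk 1
      simp
      omega
    -- LHS
    have lhs : psumsL (List.ofFn k)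
        = insert (k 0) ((psumsL (List.ofFn (fun i : Fin (m+1) => k i.succ))).image
            ((k 0) + ·)) := by
      rw [hofn, hofn2]
      rfl
    rw [lhs, ih _ (fun i => hk i.succ)]
    -- RHS
    have himage : Finset.image
        (fun i : Fin (m+2) => ((List.ofFn k).take ((i:ℕ)+1)).sum) Finset.univ
        = insert (k 0) (Finset.image
            ((k 0) + ·) (Finset.image
              (fun i : Fin (m+1) => ((List.ofFn (fun i : Fin (m+1) => k i.succ)).take
                ((i:ℕ)+1)).sum) Finset.univ)) := by
      rw [Fin.univ_succ, Finset.cons_eq_insert, Finset.image_insert, Finset.map_eq_image, Finset.image_image, Finset.image_image]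
      congr 1
      · rw [hofn]; simp
      · ext y
        simp only [Finset.mem_image, Function.comp]
        constructor
        · rintro ⟨i, _, rfl⟩
          refine ⟨i, by simp, ?_⟩
          rw [hofn]
          simp [List.take_succ_cons, Fin.val_succ]
        · rintro ⟨i, _, rfl⟩
          refine ⟨i, by simp, ?_⟩
          rw [hofn]
          simp [List.take_succ_cons, Fin.val_succ]
    rw [himage]
    have htot : (List.ofFn k).sum
        = k 0 + (List.ofFn (fun i : Fin (m+1) => k i.succ)).sum := by
      rw [hofn]; simp
    rw [htot]
    rw [Finset.erase_insert_of_ne (by omega)]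
    congr 1
    rw [Finset.image_erase (fun a b => by omega)]

lemma commaSet_eq_psumsL (m : ℕ) (k : Fin (m+1) → ℕ) (hk : ∀ i, 0 < k i) :
    commaSet k = psumsL (List.ofFn k) := by
  rw [psumsL_ofFn m k hk]
  unfold commaSet
  have hfun : (fun i : Fin (m+1) => ∑ j ∈ Finset.Iic i, k j)
      = fun i : Fin (m+1) => ((List.ofFn k).take ((i:ℕ)+1)).sum := by
    funext i
    rw [List.sum_take_ofFn]
    apply Finset.sum_congr ?_ (fun _ _ => rfl)
    ext j
    simp only [Finset.mem_Iic, Finset.mem_filter, Finset.mem_univ, true_and, Fin.le_def,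
      Nat.lt_succ_iff]
  rw [hfun]
  congr 1
  rw [List.sum_ofFn]

lemma mem_decTuples {m N : ℕ} {n : Fin m → ℕ} :
    n ∈ decTuples m N ↔ (∀ i, 1 ≤ n i ∧ n i ≤ N) ∧ ∀ i j : Fin m, i ≤ j → n j ≤ n i := by
  simp [decTuples, Fintype.mem_piFinset, Finset.mem_filter, Finset.mem_Icc]

lemma sum_decTuples_succ {M : Type*} [AddCommMonoid M] (m N : ℕ) (F : (Fin (m+1) → ℕ) → M) :
    ∑ n ∈ decTuples (m+1) N, F n
      = ∑ s ∈ Finset.Icc 1 N, ∑ t ∈ decTuples m s, F (Fin.cons s t) := by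
  rw [← Finset.sum_sigma (Finset.Icc 1 N) (fun s => decTuples m s)
    (fun q => F (Fin.cons q.1 q.2))]
  apply Finset.sum_nbij' (i := fun n => (⟨n 0, Fin.tail n⟩ : Σ _ : ℕ, (Fin m → ℕ)))
    (j := fun q => Fin.cons q.1 q.2)
  · intro n hn
    rw [mem_decTuples] at hn
    obtain ⟨hb, hd⟩ := hn
    rw [Finset.mem_sigma, Finset.mem_Icc, mem_decTuples]
    refine ⟨⟨(hb 0).1, (hb 0).2⟩, ?_, ?_⟩
    · intro i
      exact ⟨(hb i.succ).1, hd 0 i.succ (Fin.zero_le _)⟩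
    · intro i j hij
      exact hd i.succ j.succ (by rwa [Fin.succ_le_succ_iff])
  · intro q hq
    rw [Finset.mem_sigma, Finset.mem_Icc, mem_decTuples] at hq
    obtain ⟨⟨hs1, hs2⟩, hb, hd⟩ := hq
    rw [mem_decTuples]
    constructor
    · intro i
      induction i using Fin.cases with
      | zero => simpa using ⟨hs1, hs2⟩
      | succ i' =>
        rw [Fin.cons_succ]
        exact ⟨(hb i').1, le_trans (hb i').2 hs2⟩
    · intro i j hij
      induction i using Fin.cases with
      | zero =>
        induction j using Fin.cases with
        | zero => exact le_rfl
        | succ j' => rw [Fin.cons_succ, Fin.cons_zero]; exact (hb j').2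
      | succ i' =>
        induction j using Fin.cases with
        | zero =>
          exact absurd (Fin.le_zero_iff.mp hij) (Fin.succ_ne_zero i')
        | succ j' =>
          rw [Fin.cons_succ, Fin.cons_succ]
          exact hd i' j' (by rwa [Fin.succ_le_succ_iff] at hij)
  · intro n _; exact Fin.cons_self_tail n
  · rintro ⟨s, t⟩ _
    simp only [Fin.cons_zero, Fin.tail_cons]
  · intro n _
    rw [Fin.cons_self_tail]

lemma decTuples_zero_eq (s : ℕ) : decTuples 0 s = {fun i : Fin 0 => i.elim0} := by
  apply Finset.eq_singleton_iff_unique_mem.mpr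
  constructor
  · rw [mem_decTuples]
    exact ⟨fun i => i.elim0, fun i => i.elim0⟩
  · intro y _
    funext i
    exact i.elim0

lemma fiber_cons_eq (m N s : ℕ) (hs : 1 ≤ s) (hsN : s ≤ N) (f : (Fin (m+1) → ℕ) → ℚ) :
    ∑ n ∈ (decTuples (m+1) N).filter (fun n => n 0 = s), f n
      = ∑ t ∈ decTuples m s, f (Fin.cons s t) := by
  rw [Finset.sum_filter, sum_decTuples_succ m N (fun n => if n 0 = s then f n else 0)]
  have h1 : ∀ s' ∈ Finset.Icc 1 N,
      ∑ t ∈ decTuples m s', (if (Fin.cons (α := fun _ : Fin (m+1) => ℕ) s' t) 0 = s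
          then f (Fin.cons s' t) else 0)
      = if s' = s then ∑ t ∈ decTuples m s', f (Fin.cons s' t) else 0 := by
    intro s' _
    simp only [Fin.cons_zero]
    by_cases h : s' = s
    · simp [h]
    · simp [h]
  rw [Finset.sum_congr rfl h1, Finset.sum_ite_eq' (Finset.Icc 1 N) s
    (fun s' => ∑ t ∈ decTuples m s', f (Fin.cons s' t)),
    if_pos (Finset.mem_Icc.mpr ⟨hs, hsN⟩)]

lemma fib_eq : ∀ (m : ℕ) (k : Fin (m+1) → ℕ), (∀ i, 0 < k i) → ∀ (N s : ℕ), 1 ≤ s → s ≤ N →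
    ∑ n ∈ (decTuples (m+1) N).filter (fun n => n 0 = s), (∏ i, (n i : ℚ)^(k i))⁻¹
      = Bw s (wordL (List.ofFn k)) := by
  intro m
  induction m with
  | zero =>
    intro k hk N s hs hsN
    rw [fiber_cons_eq 0 N s hs hsN, decTuples_zero_eq]
    rw [Finset.sum_singleton]
    have hprod : ∏ i : Fin 1,
        ((Fin.cons (α := fun _ : Fin 1 => ℕ) s (fun i : Fin 0 => i.elim0) i : ℕ) : ℚ)^(k i)
        = (s:ℚ)^(k 0) := by
      rw [Fin.prod_univ_succ]
      simp
    rw [hprod]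
    have hofn : List.ofFn k = [k 0] := by
      rw [List.ofFn_succ]; simp
    rw [hofn]
    show _ = Bw s (wordL [k 0])
    have : wordL [k 0] = List.replicate (k 0 - 1) false ++ [] := by
      simp [wordL]
    rw [this, Bw_replicate, Bw_nil, ← pow_succ]
    have : k 0 - 1 + 1 = k 0 := by have := hk 0; omega
    rw [this, inv_pow]
  | succ m ih =>
    intro k hk N s hs hsN
    rw [fiber_cons_eq (m+1) N s hs hsN]
    have hterm : ∀ t, (∏ i, ((Fin.cons s t i : ℕ) : ℚ)^(k i))⁻¹
        = ((s:ℚ)^(k 0))⁻¹ * (∏ i : Fin (m+1), ((t i : ℕ) : ℚ)^(k i.succ))⁻¹ := by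
      intro t
      rw [Fin.prod_univ_succ]
      simp only [Fin.cons_zero, Fin.cons_succ]
      rw [mul_inv]
    simp only [hterm]
    rw [← Finset.mul_sum]
    rw [← Finset.sum_fiberwise_of_maps_to (g := fun t : Fin (m+1) → ℕ => t 0)
      (t := Finset.Icc 1 s)
      (fun t ht => Finset.mem_Icc.mpr ⟨(mem_decTuples.mp ht).1 0|>.1,
        (mem_decTuples.mp ht).1 0 |>.2⟩)
      (fun t => (∏ i : Fin (m+1), ((t i : ℕ) : ℚ)^(k i.succ))⁻¹)]
    have hinner : ∀ u ∈ Finset.Icc 1 s,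
        ∑ t ∈ (decTuples (m+1) s).filter (fun t => t 0 = u),
          (∏ i : Fin (m+1), ((t i : ℕ) : ℚ)^(k i.succ))⁻¹
        = Bw u (wordL (List.ofFn (fun i : Fin (m+1) => k i.succ))) := by
      intro u hu
      rw [Finset.mem_Icc] at hu
      exact ih (fun i => k i.succ) (fun i => hk i.succ) s u hu.1 hu.2
    rw [Finset.sum_congr rfl hinner]
    -- RHS
    have hofn : List.ofFn k = k 0 :: List.ofFn (fun i : Fin (m+1) => k i.succ) :=
      List.ofFn_succ (f := k)
    have hofn2 : List.ofFn (fun i : Fin (m+1) => k i.succ)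
        = k 1 :: List.ofFn (fun i : Fin m => k i.succ.succ) := by
      rw [List.ofFn_succ]
      congr 1
    have hword : wordL (List.ofFn k) = List.replicate (k 0 - 1) false
        ++ true :: wordL (List.ofFn (fun i : Fin (m+1) => k i.succ)) := by
      rw [hofn, hofn2, wordL_cons_cons, ← hofn2]
    rw [hword, Bw_replicate, Bw_true, ← mul_assoc, ← pow_succ]
    have : k 0 - 1 + 1 = k 0 := by have := hk 0; omega
    rw [this, inv_pow]

section PolyId

variable {R : Type*} [CommRing R]

/-- Exact transport identity in `R[X]`. -/
lemma transport_id (u N : ℕ) (hu : 1 ≤ u) :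
    (X - 1 : R[X]) * ∑ s ∈ Finset.Icc (u+1) N, C (((s-1).choose u : ℕ) : R) * X^s
      = C ((N.choose u : ℕ) : R) * X^(N+1)
        - X * ∑ s ∈ Finset.Icc u N, C (((s-1).choose (u-1) : ℕ) : R) * X^s := by
  induction N with
  | zero =>
    rw [Finset.Icc_eq_empty (by omega), Finset.Icc_eq_empty (by omega),
      Nat.choose_eq_zero_of_lt (by omega)]
    simp
  | succ N ihN =>
    rcases lt_trichotomy (N+1) u with h | h | h
    · rw [Finset.Icc_eq_empty (by omega), Finset.Icc_eq_empty (by omega),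
        Nat.choose_eq_zero_of_lt (by omega)]
      simp
    · -- N+1 = u
      subst h
      rw [Finset.Icc_eq_empty (by omega), Finset.Icc_self, Finset.sum_empty,
        Finset.sum_singleton, Nat.choose_self]
      simp only [Nat.add_sub_cancel, Nat.choose_self, Nat.cast_one, map_one, one_mul]
      ring
    · -- N ≥ u
      have hN : u ≤ N := by omega
      have e1 : Finset.Icc (u+1) (N+1) = insert (N+1) (Finset.Icc (u+1) N) := by
        ext x; simp [Finset.mem_Icc]; omega
      have e2 : Finset.Icc u (N+1) = insert (N+1) (Finset.Icc u N) := by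
        ext x; simp [Finset.mem_Icc]; omega
      rw [e1, e2, Finset.sum_insert (by simp), Finset.sum_insert (by simp)]
      have hps : ((N+1).choose u : R) = ((N.choose u : ℕ) : R) + ((N.choose (u-1) : ℕ) : R) := by
        obtain ⟨b, rfl⟩ : ∃ b, u = b + 1 := ⟨u - 1, by omega⟩
        have := Nat.choose_succ_succ (N) b
        rw [show N + 1 = N.succ from rfl]
        push_cast [this]
        simp
        ring
      rw [mul_add, ihN]
      have hs1 : (N + 1 - 1) = N := by omega
      rw [hs1, hps, map_add]
      ring

lemma choose_p_sub_one (p : ℕ) (hp : p.Prime) :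
    ∀ u, u ≤ p - 1 → (((p-1).choose u : ℕ) : ZMod p) = (-1)^u := by
  intro u
  induction u with
  | zero => intro _; simp
  | succ u ihu =>
    intro hu
    have h1 : ((p.choose (u+1) : ℕ) : ZMod p) = 0 := by
      rw [ZMod.natCast_eq_zero_iff]
      exact hp.dvd_choose_self (by omega) (by omega)
    have hps : p.choose (u+1) = (p-1).choose u + (p-1).choose (u+1) := by
      have h2 := Nat.choose_succ_succ (p-1) u
      simp only [Nat.succ_eq_add_one] at h2
      rw [show p - 1 + 1 = p from by have := hp.two_le; omega] at h2
      exact h2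
    rw [hps] at h1
    push_cast at h1
    rw [ihu (by omega)] at h1
    have : (((p-1).choose (u+1) : ℕ) : ZMod p) = -(-1)^u := by linear_combination h1
    rw [this, pow_succ]
    ring

end PolyId

lemma sigma_id (p : ℕ) (hp : p.Prime) [Fact p.Prime] :
    ∀ u, 1 ≤ u → u ≤ p - 1 →
    ∑ s ∈ Finset.Icc u (p-1), (-1 : (ZMod p)[X])^(u-1) * C (((s-1).choose (u-1) : ℕ) : ZMod p)
        * X^s
      = (X - 1)^(p-u) * X^u - X^p := by
  have hp1 : p - 1 + 1 = p := by have := hp.two_le; omega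
  have hX1 : (X - 1 : (ZMod p)[X]) ≠ 0 := by
    have := Polynomial.X_sub_C_ne_zero (1 : ZMod p)
    simpa using this
  have hcancel : ∀ A B : (ZMod p)[X], A * (X - 1) = B * (X - 1) → A = B := by
    intro A B h
    exact mul_right_cancel₀ hX1 h
  have hsub : ((X : (ZMod p)[X]) - 1)^p = X^p - 1 := by
    have := sub_pow_char (X : (ZMod p)[X]) 1 (p := p)
    simpa using this
  intro u hu
  induction u, hu using Nat.le_induction with
  | base =>
    intro hup
    have hbase : ∑ s ∈ Finset.Icc 1 (p-1), (-1 : (ZMod p)[X])^(1-1)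
        * C (((s-1).choose 0 : ℕ) : ZMod p) * X^s = ∑ s ∈ Finset.Icc 1 (p-1), X^s := by
      apply Finset.sum_congr rfl
      intro s _
      simp
    rw [hbase]
    apply hcancel
    have hgeom : (∑ s ∈ Finset.Icc 1 (p-1), (X : (ZMod p)[X])^s) * (X - 1)
        = X^p - X := by
      have h1 : ∑ s ∈ Finset.Icc 1 (p-1), (X : (ZMod p)[X])^s
          = X * ∑ s ∈ Finset.range (p-1), X^s := by
        rw [Finset.mul_sum]
        have hmap : Finset.Icc 1 (p-1)
            = Finset.map (addRightEmbedding 1) (Finset.range (p-1)) := by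
          ext x
          simp only [Finset.mem_Icc, Finset.mem_map, Finset.mem_range, addRightEmbedding_apply]
          constructor
          · intro ⟨h1, h2⟩; exact ⟨x - 1, by omega, by omega⟩
          · rintro ⟨y, hy, rfl⟩; omega
        rw [hmap, Finset.sum_map]
        apply Finset.sum_congr rfl
        intro s _
        simp [addRightEmbedding, pow_succ]
        ring
      calc (∑ s ∈ Finset.Icc 1 (p-1), (X : (ZMod p)[X])^s) * (X - 1)
          = X * ((∑ s ∈ Finset.range (p-1), X^s) * (X - 1)) := by rw [h1]; ring
        _ = X * (X^(p-1) - 1) := by rw [geom_sum_mul]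
        _ = X^p - X := by rw [mul_sub, mul_one, ← pow_succ', hp1]
    rw [hgeom]
    symm
    calc ((X - 1 : (ZMod p)[X])^(p-1) * X^1 - X^p) * (X - 1)
        = (X-1)^(p-1) * (X - 1) * X - X^p * (X - 1) := by ring
      _ = (X^p - 1) * X - X^p * (X - 1) := by rw [← pow_succ, hp1, hsub]
      _ = X^p - X := by ring
  | succ u hu1 ihu =>
    intro hup
    have hup' : u ≤ p - 1 := by omega
    have ih := ihu hup'
    apply hcancel
    have hsimp0 : ∑ s ∈ Finset.Icc u (p-1), (-1 : (ZMod p)[X])^(u-1)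
        * C (((s-1).choose (u-1) : ℕ) : ZMod p) * X^s
        = (-1)^(u-1) * ∑ s ∈ Finset.Icc u (p-1), C (((s-1).choose (u-1) : ℕ) : ZMod p) * X^s := by
      rw [Finset.mul_sum]
      apply Finset.sum_congr rfl
      intro s _
      ring
    have key : (∑ s ∈ Finset.Icc (u+1) (p-1), (-1 : (ZMod p)[X])^(u+1-1)
        * C (((s-1).choose (u+1-1) : ℕ) : ZMod p) * X^s) * (X - 1)
        = X^p + X * ∑ s ∈ Finset.Icc u (p-1), (-1 : (ZMod p)[X])^(u-1)
            * C (((s-1).choose (u-1) : ℕ) : ZMod p) * X^s := by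
      have hsimp : ∑ s ∈ Finset.Icc (u+1) (p-1), (-1 : (ZMod p)[X])^(u+1-1)
          * C (((s-1).choose (u+1-1) : ℕ) : ZMod p) * X^s
          = (-1)^u * ∑ s ∈ Finset.Icc (u+1) (p-1), C (((s-1).choose u : ℕ) : ZMod p) * X^s := by
        rw [Finset.mul_sum]
        apply Finset.sum_congr rfl
        intro s _
        have h : u + 1 - 1 = u := by omega
        rw [h]
        ring
      have htr := transport_id (R := ZMod p) u (p-1) (by omega)
      have hC : (C (((p-1).choose u : ℕ) : ZMod p) : (ZMod p)[X]) = (-1)^u := by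
        rw [choose_p_sub_one p hp u hup']
        simp
      rw [hsimp, hsimp0]
      calc ((-1 : (ZMod p)[X])^u * ∑ s ∈ Finset.Icc (u+1) (p-1),
              C (((s-1).choose u : ℕ) : ZMod p) * X^s) * (X - 1)
          = (-1)^u * ((X - 1) * ∑ s ∈ Finset.Icc (u+1) (p-1),
              C (((s-1).choose u : ℕ) : ZMod p) * X^s) := by ring
        _ = (-1)^u * (C (((p-1).choose u : ℕ) : ZMod p) * X^(p-1+1)
              - X * ∑ s ∈ Finset.Icc u (p-1), C (((s-1).choose (u-1) : ℕ) : ZMod p) * X^s) := by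
            rw [htr]
        _ = X^p + X * ((-1)^(u-1) * ∑ s ∈ Finset.Icc u (p-1),
              C (((s-1).choose (u-1) : ℕ) : ZMod p) * X^s) := by
            rw [hC, hp1]
            obtain ⟨b, rfl⟩ : ∃ b, u = b + 1 := ⟨u - 1, by omega⟩
            simp only [Nat.add_sub_cancel, pow_succ]
            have hsq : ((-1 : (ZMod p)[X])^b) * ((-1)^b) = 1 := by
              rw [← pow_add, ← two_mul, pow_mul]
              simp
            linear_combination (X^p : (ZMod p)[X]) * hsq
    rw [key, ih]
    have hexp : p - u = (p - (u+1)) + 1 := by omega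
    rw [hexp, pow_succ]
    ring

lemma main_KX (p : ℕ) (hp : p.Prime) [Fact p.Prime] (a b : ℕ → ZMod p)
    (hab : ∀ s ∈ Finset.Icc 1 (p-1), a s = ∑ u ∈ Finset.Icc 1 s,
      (-1 : ZMod p)^(u-1) * (((s-1).choose (u-1) : ℕ) : ZMod p) * b u) :
    (X - 1)^(p-1) * ∑ s ∈ Finset.Icc 1 (p-1), C (a s) * X^s
      = (X^p - 1) * (∑ u ∈ Finset.Icc 1 (p-1), C (b u) * X^u * (X-1)^(p-1-u))
        - X^p * (X-1)^(p-1) * C (∑ u ∈ Finset.Icc 1 (p-1), b u) := by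
  have hp2 := hp.two_le
  have hsub : ((X : (ZMod p)[X]) - 1)^p = X^p - 1 := by
    have := sub_pow_char (X : (ZMod p)[X]) 1 (p := p)
    simpa using this
  have step1 : ∑ s ∈ Finset.Icc 1 (p-1), C (a s) * X^s
      = ∑ u ∈ Finset.Icc 1 (p-1), C (b u) * ((X-1)^(p-u) * X^u - X^p) := by
    have h1 : ∀ s ∈ Finset.Icc 1 (p-1), C (a s) * X^s
        = ∑ u ∈ Finset.Icc 1 s, C (b u)
            * ((-1 : (ZMod p)[X])^(u-1) * C (((s-1).choose (u-1) : ℕ) : ZMod p) * X^s) := by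
      intro s hs
      rw [hab s hs, map_sum, Finset.sum_mul]
      apply Finset.sum_congr rfl
      intro u _
      rw [map_mul, map_mul, map_pow, map_neg, map_one]
      ring
    rw [Finset.sum_congr rfl h1, Finset.sum_comm' (t' := Finset.Icc 1 (p-1))
      (s' := fun u => Finset.Icc u (p-1))
      (by intro s u; simp only [Finset.mem_Icc]; omega)]
    apply Finset.sum_congr rfl
    intro u hu
    rw [Finset.mem_Icc] at hu
    rw [← Finset.mul_sum, sigma_id p hp u hu.1 hu.2]
  rw [step1]
  have step2 : ∀ u ∈ Finset.Icc 1 (p-1),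
      (X - 1 : (ZMod p)[X])^p * (C (b u) * X^u * (X-1)^(p-1-u))
      = (X-1)^(p-1) * (C (b u) * ((X-1)^(p-u) * X^u)) := by
    intro u hu
    rw [Finset.mem_Icc] at hu
    have hexp : p + (p - 1 - u) = (p - 1) + (p - u) := by omega
    calc (X - 1 : (ZMod p)[X])^p * (C (b u) * X^u * (X-1)^(p-1-u))
        = (X-1)^(p + (p-1-u)) * (C (b u) * X^u) := by rw [pow_add]; ring
      _ = (X-1)^(p-1) * (X-1)^(p-u) * (C (b u) * X^u) := by rw [hexp, pow_add]
      _ = (X-1)^(p-1) * (C (b u) * ((X-1)^(p-u) * X^u)) := by ring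
  rw [← hsub]
  simp only [map_sum, Finset.mul_sum]
  rw [Finset.sum_congr rfl step2, ← Finset.sum_sub_distrib]
  apply Finset.sum_congr rfl
  intro u _
  ring

lemma poly_fiber_sum (m N : ℕ) (g : (Fin (m+1) → ℕ) → ℚ) (e : ℕ → Polynomial ℚ) :
    ∑ n ∈ decTuples (m+1) N, C (g n) * e (n 0)
      = ∑ s ∈ Finset.Icc 1 N,
          C (∑ n ∈ (decTuples (m+1) N).filter (fun n => n 0 = s), g n) * e s := by
  rw [← Finset.sum_fiberwise_of_maps_to (g := fun n : Fin (m+1) → ℕ => n 0)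
    (t := Finset.Icc 1 N)
    (fun n hn => Finset.mem_Icc.mpr ⟨((mem_decTuples.mp hn).1 0).1, ((mem_decTuples.mp hn).1 0).2⟩)
    (fun n => C (g n) * e (n 0))]
  apply Finset.sum_congr rfl
  intro s _
  have h1 : ∀ n ∈ (decTuples (m+1) N).filter (fun n => n 0 = s),
      C (g n) * e (n 0) = C (g n) * e s := by
    intro n hn
    rw [(Finset.mem_filter.mp hn).2]
  rw [Finset.sum_congr rfl h1, ← Finset.sum_mul, ← map_sum]

lemma scalar_fiber_sum (m N : ℕ) (g : (Fin (m+1) → ℕ) → ℚ) :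
    ∑ n ∈ decTuples (m+1) N, g n
      = ∑ s ∈ Finset.Icc 1 N, ∑ n ∈ (decTuples (m+1) N).filter (fun n => n 0 = s), g n := by
  rw [Finset.sum_fiberwise_of_maps_to (g := fun n : Fin (m+1) → ℕ => n 0)
    (fun n hn => Finset.mem_Icc.mpr ⟨((mem_decTuples.mp hn).1 0).1,
      ((mem_decTuples.mp hn).1 0).2⟩) g]

lemma int_clear (p w m : ℕ) (k : Fin (m+1) → ℕ) (hk : ∀ i, 0 < k i) (hw : ∑ i, k i ≤ w)
    (s : ℕ) :
    (((p-1).factorial^w : ℕ) : ℚ) * ∑ n ∈ (decTuples (m+1) (p-1)).filter (fun n => n 0 = s),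
        (∏ i, (n i : ℚ)^(k i))⁻¹
      = ((∑ n ∈ (decTuples (m+1) (p-1)).filter (fun n => n 0 = s),
          ((p-1).factorial^w / ∏ i, (n i)^(k i)) : ℕ) : ℚ) := by
  rw [Nat.cast_sum, Finset.mul_sum]
  apply Finset.sum_congr rfl
  intro n hn
  have hmem := (Finset.mem_filter.mp hn).1
  rw [mem_decTuples] at hmem
  have hq0 : ∀ i, 1 ≤ n i ∧ n i ≤ p - 1 := hmem.1
  have hdvd : (∏ i, (n i)^(k i)) ∣ (p-1).factorial^w := by
    calc ∏ i, (n i)^(k i) ∣ ∏ i : Fin (m+1), ((p-1).factorial)^(k i) :=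
          Finset.prod_dvd_prod_of_dvd _ _
            (fun i _ => pow_dvd_pow_of_dvd (Nat.dvd_factorial (hq0 i).1 (hq0 i).2) _)
      _ = ((p-1).factorial)^(∑ i, k i) := Finset.prod_pow_eq_pow_sum _ _ _
      _ ∣ (p-1).factorial^w := pow_dvd_pow _ hw
  have hqpos : 0 < ∏ i, (n i)^(k i) :=
    Finset.prod_pos (fun i _ => pow_pos (hq0 i).1 _)
  have hprod : (∏ i, (n i : ℚ)^(k i)) = ((∏ i, (n i)^(k i) : ℕ) : ℚ) := by push_cast; rfl
  rw [hprod, Nat.cast_div hdvd (by exact_mod_cast hqpos.ne'), ← div_eq_mul_inv]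

lemma inPZp_of_dvd (p : ℕ) (hp : p.Prime) (b0 : ℤ) (hb0 : ¬ (p:ℤ) ∣ b0) (c : ℚ) (z : ℤ)
    (hz : (b0 : ℚ) * c = (z : ℚ)) (hdvd : (p:ℤ) ∣ z) : InPZp p c := by
  obtain ⟨a, rfl⟩ := hdvd
  exact ⟨a, b0, hb0, by rw [hz]; push_cast; ring⟩

/-- Functional equation of finite star-multiple polylogarithms: for a prime `p` and an index
`𝕜` with Hoffman dual `𝕜^∨`,
`£^⋆_{p,𝕜}(t) ≡ (t^p - 1) £^⋆_{p,𝕜^∨}(t/(t-1)) - t^p ζ^⋆_p(𝕜^∨) (mod p)`, the congruence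
being stated after multiplying through by `(t-1)^{p-1}` to clear denominators: every
coefficient of the difference lies in `p ℤ_(p)`. -/
theorem finite_star_functional_equation (p m m' : ℕ) (hp : p.Prime) (hm : 0 < m) (hm' : 0 < m')
    (k : Fin m → ℕ) (k' : Fin m' → ℕ) (hk : ∀ i, 0 < k i) (hk' : ∀ i, 0 < k' i)
    (hwt : ∑ i, k' i = ∑ i, k i)
    (hdual : ∀ x : ℕ, x ∈ commaSet k' ↔ (0 < x ∧ x < ∑ i, k i ∧ x ∉ commaSet k)) :
    ∀ d : ℕ, InPZp p
      (((X - 1) ^ (p - 1) * Lstar p m hm k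
        - ((X ^ p - 1) * LstarFrac p m' hm' k'
            - X ^ p * (X - 1) ^ (p - 1)
              * C (∑ n ∈ decTuples m' (p - 1), (1 : ℚ) / ∏ i, (n i : ℚ) ^ (k' i)))).coeff d) := by
  obtain ⟨m₀, rfl⟩ : ∃ m₀, m = m₀ + 1 := ⟨m - 1, by omega⟩
  obtain ⟨m₁, rfl⟩ : ∃ m₁, m' = m₁ + 1 := ⟨m' - 1, by omega⟩
  haveI : Fact p.Prime := ⟨hp⟩
  have hp2 := hp.two_le
  intro d
  set w := ∑ i, k i with hw
  -- fiber sums over ℚ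
  set afib : ℕ → ℚ := fun s => ∑ n ∈ (decTuples (m₀+1) (p-1)).filter (fun n => n 0 = s),
    (∏ i, (n i : ℚ)^(k i))⁻¹ with hafib
  set bfib : ℕ → ℚ := fun s => ∑ n ∈ (decTuples (m₁+1) (p-1)).filter (fun n => n 0 = s),
    (∏ i, (n i : ℚ)^(k' i))⁻¹ with hbfib
  -- word duality
  have hofn_ne : (List.ofFn k) ≠ [] := by
    intro h
    have := List.length_ofFn (f := k)
    rw [h] at this
    simp at this
  have hofn_ne' : (List.ofFn k') ≠ [] := by
    intro h
    have := List.length_ofFn (f := k')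
    rw [h] at this
    simp at this
  have hpos : ∀ a ∈ List.ofFn k, 0 < a := by
    intro a ha
    obtain ⟨i, rfl⟩ := List.mem_ofFn.mp ha
    exact hk i
  have hpos' : ∀ a ∈ List.ofFn k', 0 < a := by
    intro a ha
    obtain ⟨i, rfl⟩ := List.mem_ofFn.mp ha
    exact hk' i
  have hsums : (List.ofFn k').sum = (List.ofFn k).sum := by
    rw [List.sum_ofFn, List.sum_ofFn]
    exact hwt
  have hword : wordL (List.ofFn k') = (wordL (List.ofFn k)).map not := by
    apply wordL_dual _ _ hofn_ne hofn_ne' hpos hpos' hsums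
    intro x
    rw [← commaSet_eq_psumsL m₀ k hk, ← commaSet_eq_psumsL m₁ k' hk', List.sum_ofFn]
    exact hdual x
  -- ℚ-duality of fiber sums
  have hdualQ : ∀ s, 1 ≤ s → s ≤ p-1 → afib s = ∑ u ∈ Finset.Icc 1 s,
      (-1:ℚ)^(u-1) * (((s-1).choose (u-1) : ℕ) : ℚ) * bfib u := by
    intro s h1 h2
    have e1 := fib_eq m₀ k hk (p-1) s h1 h2
    have e2 := Bw_dual (wordL (List.ofFn k)) s h1
    rw [← hword] at e2
    rw [hafib]
    show (∑ n ∈ (decTuples (m₀+1) (p-1)).filter (fun n => n 0 = s),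
      (∏ i, (n i : ℚ)^(k i))⁻¹) = _
    rw [e1, e2]
    apply Finset.sum_congr rfl
    intro u hu
    rw [Finset.mem_Icc] at hu
    rw [← fib_eq m₁ k' hk' (p-1) u hu.1 (le_trans hu.2 h2)]
  -- integer versions
  set Df : ℕ := (p-1).factorial ^ w with hDf
  set zN : ℕ → ℕ := fun s => ∑ n ∈ (decTuples (m₀+1) (p-1)).filter (fun n => n 0 = s),
    Df / ∏ i, (n i)^(k i) with hzN
  set zN' : ℕ → ℕ := fun s => ∑ n ∈ (decTuples (m₁+1) (p-1)).filter (fun n => n 0 = s),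
    Df / ∏ i, (n i)^(k' i) with hzN'
  have haz : ∀ s, (Df : ℚ) * afib s = ((zN s : ℕ) : ℚ) := by
    intro s
    exact int_clear p w m₀ k hk (le_of_eq hw.symm) s
  have hbz : ∀ s, (Df : ℚ) * bfib s = ((zN' s : ℕ) : ℚ) := by
    intro s
    exact int_clear p w m₁ k' hk' (le_of_eq hwt) s
  -- duality over ZMod p
  have habK : ∀ s ∈ Finset.Icc 1 (p-1), ((zN s : ℕ) : ZMod p)
      = ∑ u ∈ Finset.Icc 1 s, (-1 : ZMod p)^(u-1) * (((s-1).choose (u-1) : ℕ) : ZMod p)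
          * ((zN' u : ℕ) : ZMod p) := by
    intro s hs
    rw [Finset.mem_Icc] at hs
    have hQ : ((zN s : ℕ):ℚ) = ∑ u ∈ Finset.Icc 1 s,
        (-1:ℚ)^(u-1) * (((s-1).choose (u-1) : ℕ) : ℚ) * ((zN' u : ℕ):ℚ) := by
      rw [← haz s, hdualQ s hs.1 hs.2, Finset.mul_sum]
      apply Finset.sum_congr rfl
      intro u _
      rw [← hbz u]
      ring
    have hZ : ((zN s : ℕ) : ℤ) = ∑ u ∈ Finset.Icc 1 s,
        (-1:ℤ)^(u-1) * (((s-1).choose (u-1) : ℕ) : ℤ) * ((zN' u : ℕ) : ℤ) := by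
      exact_mod_cast hQ
    calc ((zN s : ℕ) : ZMod p) = (((zN s : ℕ) : ℤ) : ZMod p) := by push_cast; rfl
      _ = _ := by rw [hZ]; push_cast; rfl
  -- integer polynomial
  set Ez : Polynomial ℤ := (X-1)^(p-1) * (∑ s ∈ Finset.Icc 1 (p-1), C ((zN s : ℕ) : ℤ) * X^s)
    - ((X^p - 1) * (∑ u ∈ Finset.Icc 1 (p-1), C ((zN' u : ℕ) : ℤ) * X^u * (X-1)^(p-1-u))
        - X^p * (X-1)^(p-1) * C (∑ u ∈ Finset.Icc 1 (p-1), ((zN' u : ℕ) : ℤ))) with hEz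
  have hmapK : Ez.map (Int.castRingHom (ZMod p)) = 0 := by
    have hmain := main_KX p hp (fun s => ((zN s : ℕ) : ZMod p)) (fun u => ((zN' u : ℕ) : ZMod p))
      habK
    rw [hEz]
    simp only [Polynomial.map_sub, Polynomial.map_mul, Polynomial.map_pow, Polynomial.map_sum,
      Polynomial.map_C, Polynomial.map_X, Polynomial.map_one, Polynomial.map_pow]
    rw [sub_eq_zero]
    convert hmain using 2 <;> simp [Int.cast_natCast]
  have hker : (p:ℤ) ∣ Ez.coeff d := by
    have h0 : (Ez.map (Int.castRingHom (ZMod p))).coeff d = 0 := by rw [hmapK]; simp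
    rw [Polynomial.coeff_map] at h0
    have h1 : ((Ez.coeff d : ℤ) : ZMod p) = 0 := by simpa using h0
    exact (ZMod.intCast_zmod_eq_zero_iff_dvd _ _).mp h1
  -- ℚ-side polynomial identities
  have hL : Lstar p (m₀+1) hm k = ∑ s ∈ Finset.Icc 1 (p-1), C (afib s) * X^s := by
    unfold Lstar
    simp only [one_div]
    exact poly_fiber_sum m₀ (p-1) _ (fun s => X^s)
  have hF : LstarFrac p (m₁+1) hm' k'
      = ∑ s ∈ Finset.Icc 1 (p-1), C (bfib s) * (X^s * (X-1)^(p-1-s)) := by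
    unfold LstarFrac
    simp only [one_div, mul_assoc]
    exact poly_fiber_sum m₁ (p-1) _ (fun s => X^s * (X-1)^(p-1-s))
  have hZeta : (∑ n ∈ decTuples (m₁+1) (p-1), (1 : ℚ) / ∏ i, (n i : ℚ) ^ (k' i))
      = ∑ s ∈ Finset.Icc 1 (p-1), bfib s := by
    simp only [one_div]
    exact scalar_fiber_sum m₁ (p-1) _
  -- multiply through by Df
  have hQpoly : C ((Df : ℕ) : ℚ) * ((X - 1) ^ (p - 1) * Lstar p (m₀+1) hm k
      - ((X ^ p - 1) * LstarFrac p (m₁+1) hm' k'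
          - X ^ p * (X - 1) ^ (p - 1)
            * C (∑ n ∈ decTuples (m₁+1) (p - 1), (1 : ℚ) / ∏ i, (n i : ℚ) ^ (k' i))))
      = Ez.map (Int.castRingHom ℚ) := by
    rw [hL, hF, hZeta, hEz]
    simp only [Polynomial.map_sub, Polynomial.map_mul, Polynomial.map_pow, Polynomial.map_sum,
      Polynomial.map_C, Polynomial.map_X, Polynomial.map_one]
    have eA : C ((Df : ℕ) : ℚ) * (∑ s ∈ Finset.Icc 1 (p-1), C (afib s) * X^s)
        = ∑ s ∈ Finset.Icc 1 (p-1), C ((Int.castRingHom ℚ) ((zN s : ℕ) : ℤ)) * X^s := by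
      rw [Finset.mul_sum]
      apply Finset.sum_congr rfl
      intro s _
      rw [← mul_assoc, ← map_mul, haz s]
      norm_num
    have eB : C ((Df : ℕ) : ℚ) * (∑ s ∈ Finset.Icc 1 (p-1), C (bfib s) * (X^s * (X-1)^(p-1-s)))
        = ∑ s ∈ Finset.Icc 1 (p-1), C ((Int.castRingHom ℚ) ((zN' s : ℕ) : ℤ)) * X^s
            * (X-1)^(p-1-s) := by
      rw [Finset.mul_sum]
      apply Finset.sum_congr rfl
      intro s _
      rw [← mul_assoc, ← map_mul, hbz s, mul_assoc]
      norm_num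
    have eD : C ((Df : ℕ) : ℚ) * C (∑ s ∈ Finset.Icc 1 (p-1), bfib s)
        = C ((Int.castRingHom ℚ) (∑ u ∈ Finset.Icc 1 (p-1), ((zN' u : ℕ) : ℤ))) := by
      rw [← map_mul, Finset.mul_sum]
      congr 1
      rw [Finset.sum_congr rfl (fun u _ => hbz u)]
      simp
    calc C ((Df : ℕ) : ℚ) * ((X - 1) ^ (p - 1)
          * (∑ s ∈ Finset.Icc 1 (p-1), C (afib s) * X^s)
        - ((X ^ p - 1) * (∑ s ∈ Finset.Icc 1 (p-1), C (bfib s) * (X^s * (X-1)^(p-1-s)))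
            - X ^ p * (X - 1) ^ (p - 1) * C (∑ s ∈ Finset.Icc 1 (p-1), bfib s)))
        = (X - 1) ^ (p - 1)
            * (C ((Df : ℕ) : ℚ) * ∑ s ∈ Finset.Icc 1 (p-1), C (afib s) * X^s)
          - ((X ^ p - 1) * (C ((Df : ℕ) : ℚ)
                * ∑ s ∈ Finset.Icc 1 (p-1), C (bfib s) * (X^s * (X-1)^(p-1-s)))
              - X ^ p * (X - 1) ^ (p - 1)
                * (C ((Df : ℕ) : ℚ) * C (∑ s ∈ Finset.Icc 1 (p-1), bfib s))) := by ring
      _ = _ := by rw [eA, eB, eD]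
  -- conclude
  have hcoeff : ((Df : ℕ) : ℚ) * (((X - 1) ^ (p - 1) * Lstar p (m₀+1) hm k
      - ((X ^ p - 1) * LstarFrac p (m₁+1) hm' k'
          - X ^ p * (X - 1) ^ (p - 1)
            * C (∑ n ∈ decTuples (m₁+1) (p - 1), (1 : ℚ) / ∏ i, (n i : ℚ) ^ (k' i)))).coeff d)
      = ((Ez.coeff d : ℤ) : ℚ) := by
    have := congrArg (fun Q : Polynomial ℚ => Q.coeff d) hQpoly
    simpa [Polynomial.coeff_C_mul, Polynomial.coeff_map] using this
  have hpd : ¬ (p:ℤ) ∣ ((Df : ℕ) : ℤ) := by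
    rw [Int.natCast_dvd_natCast]
    intro hdvd
    have := hp.dvd_of_dvd_pow hdvd
    rw [hp.dvd_factorial] at this
    omega
  exact inPZp_of_dvd p hp ((Df : ℕ) : ℤ) hpd _ (Ez.coeff d) (by exact_mod_cast hcoeff) hker
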